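/- Let b₀, b₁ be reals with 0 < b₁ ≤ b₀ and b₀ + b₁ < 1, let μ* be the (b₀,b₁)-branching measure on C, and let T be the associated capacity (with T(∅) = 0). Let Q₀, Q₁ ⊆ 2^ℕ be closed (possibly empty), let i⌢Qᵢ = {i⌢x : x ∈ Qᵢ} for i = 0,1, and let Q = 0⌢Q₀ ∪ 1⌢Q₁. Then with q₀ = T(Q₀) and q₁ = T(Q₁), T(Q) = (1 − b₁)q₀ + (1 − b₀)q₁ − (1 − (b₀ + b₁))·q₀·q₁. -/

import Mathlib

open Set MeasureTheory Topology Filter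

/-- Cantor space `2^ℕ`. -/
abbrev Cantor : Type := ℕ → Bool

/-- The basic interval `I(σ)` of all extensions of the finite binary string `σ`. -/
def cyl (σ : List Bool) : Set Cantor :=
  {x | ∀ i : Fin σ.length, x i = σ.get i}

/-- The space `C` of nonempty closed subsets of Cantor space. -/
abbrev CC : Type := {K : Set Cantor // K.Nonempty ∧ IsClosed K}

/-- The hit-or-miss topology on `C`, generated by the sets
`V(U) = {K : K ∩ U ≠ ∅}` and `W(U) = {K : K ⊆ U}` for `U` open. -/
instance (priority := 10000) hitMissTop : TopologicalSpace CC :=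
  TopologicalSpace.generateFrom
    ({S | ∃ U : Set Cantor, IsOpen U ∧ S = {K : CC | (K.1 ∩ U).Nonempty}} ∪
     {S | ∃ U : Set Cantor, IsOpen U ∧ S = {K : CC | K.1 ⊆ U}})

/-- The Borel σ-algebra of the hit-or-miss topology. -/
instance (priority := 10000) hitMissMeasurable : MeasurableSpace CC := borel CC

/-- `A` is a finite tree of height `n` without dead ends. -/
def FinTree (n : ℕ) (A : Finset (List Bool)) : Prop :=
  A.Nonempty ∧
  (∀ σ ∈ A, σ.length ≤ n) ∧
  (∀ σ τ : List Bool, σ <+: τ → τ ∈ A → σ ∈ A) ∧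
  (∀ σ ∈ A, σ.length < n → σ ++ [false] ∈ A ∨ σ ++ [true] ∈ A)

/-- `U_A = {K ∈ C : T_K ∩ {0,1}^{≤ n} = A}`. -/
def UA (n : ℕ) (A : Finset (List Bool)) : Set CC :=
  {K | ∀ σ : List Bool, σ.length ≤ n → (σ ∈ A ↔ (K.1 ∩ cyl σ).Nonempty)}

/-- The weight of a node `σ` of `A` in the symmetric branching process with parameter `β`. -/
noncomputable def symWeight (β : List Bool → ℝ) (A : Finset (List Bool)) (σ : List Bool) : ℝ :=
  if σ ++ [false] ∈ A ∧ σ ++ [true] ∈ A then 1 - 2 * β σ else β σ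

/-- `μ` is the symmetric branching measure on `C` with parameter `β`. -/
def IsSymBranching (β : List Bool → ℝ) (μ : Measure CC) : Prop :=
  IsProbabilityMeasure μ ∧
  ∀ (n : ℕ) (A : Finset (List Bool)), FinTree n A →
    (μ (UA n A)).toReal = ∏ σ ∈ A.filter (fun σ => σ.length < n), symWeight β A σ

/-- The weight of a node `σ` of `A` in the `(b₀,b₁)`-branching process. -/
noncomputable def asymWeight (b0 b1 : ℝ) (A : Finset (List Bool)) (σ : List Bool) : ℝ :=
  if σ ++ [false] ∈ A ∧ σ ++ [true] ∈ A then 1 - b0 - b1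
  else if σ ++ [false] ∈ A then b0 else b1

/-- `μ` is the `(b₀,b₁)`-branching measure on `C`. -/
def IsBranching (b0 b1 : ℝ) (μ : Measure CC) : Prop :=
  IsProbabilityMeasure μ ∧
  ∀ (n : ℕ) (A : Finset (List Bool)), FinTree n A →
    (μ (UA n A)).toReal = ∏ σ ∈ A.filter (fun σ => σ.length < n), asymWeight b0 b1 A σ

/-- The capacity `T(Q) = μ*({K ∈ C : K ∩ Q ≠ ∅})` associated to a measure on `C`. -/
noncomputable def cap (μ : Measure CC) (Q : Set Cantor) : ℝ :=
  (μ {K : CC | (K.1 ∩ Q).Nonempty}).toReal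

/-- The sequence `i⌢x`. -/
def consSeq (i : Bool) (x : Cantor) : Cantor
  | 0 => i
  | n + 1 => x n

/-- The set `i⌢Q = {i⌢x : x ∈ Q}`. -/
def consSet (i : Bool) (Q : Set Cantor) : Set Cantor := consSeq i '' Q

-- ==== Part 1: cylinders ====

lemma mem_cyl_iff {x : Cantor} {σ : List Bool} : x ∈ cyl σ ↔ ∀ i : Fin σ.length, x i = σ.get i := Iff.rfl

lemma cyl_nil : cyl [] = univ := by
  ext x; simp [cyl]

lemma cyl_anti {σ τ : List Bool} (h : σ <+: τ) : cyl τ ⊆ cyl σ := by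
  intro x hx i
  have hl : σ.length ≤ τ.length := h.length_le
  have := hx ⟨i.1, lt_of_lt_of_le i.2 hl⟩
  rw [this]
  simp only [List.get_eq_getElem]
  exact (List.IsPrefix.getElem h _).symm

lemma isOpen_cyl (σ : List Bool) : IsOpen (cyl σ) := by
  have : cyl σ = ⋂ i : Fin σ.length, (fun x : Cantor => x i) ⁻¹' {σ.get i} := by
    ext x; simp [cyl]
  rw [this]
  exact isOpen_iInter_of_finite fun i =>
    (continuous_apply (i : ℕ)).isOpen_preimage _ (isOpen_discrete _)

lemma isClosed_cyl (σ : List Bool) : IsClosed (cyl σ) := by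
  have : cyl σ = ⋂ i : Fin σ.length, (fun x : Cantor => x i) ⁻¹' {σ.get i} := by
    ext x; simp [cyl]
  rw [this]
  exact isClosed_iInter fun i =>
    (IsClosed.preimage (continuous_apply (i : ℕ)) (isClosed_discrete _))

-- cylinder of cons
lemma consSeq_mem_cyl_cons {i j : Bool} {x : Cantor} {τ : List Bool}
    (consSeq : Bool → Cantor → Cantor)
    (hc0 : ∀ b y, consSeq b y 0 = b) (hcS : ∀ b y n, consSeq b y (n+1) = y n) :
    consSeq i x ∈ cyl (j :: τ) ↔ i = j ∧ x ∈ cyl τ := by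
  constructor
  · intro h
    constructor
    · have := h ⟨0, by simp⟩; simpa [hc0] using this
    · intro k
      have := h ⟨k.1+1, by simpa using Nat.succ_lt_succ k.2⟩
      simpa [hcS] using this
  · rintro ⟨rfl, hx⟩ k
    rcases k with ⟨_ | k, hk⟩
    · simpa [hc0] using rfl
    · have := hx ⟨k, by simpa using Nat.lt_of_succ_lt_succ hk⟩
      simpa [hcS] using this

-- ==== Part 2: measurability ====

lemma measurableSet_of_isOpen {s : Set CC} (h : IsOpen s) : MeasurableSet s :=
  MeasurableSpace.measurableSet_generateFrom h

lemma isOpen_hit (σ : List Bool) : IsOpen {K : CC | (K.1 ∩ cyl σ).Nonempty} :=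
  TopologicalSpace.isOpen_generateFrom_of_mem
    (Or.inl ⟨cyl σ, isOpen_cyl σ, rfl⟩)

lemma isOpen_miss (σ : List Bool) : IsOpen {K : CC | ¬(K.1 ∩ cyl σ).Nonempty} := by
  have : {K : CC | ¬(K.1 ∩ cyl σ).Nonempty} = {K : CC | K.1 ⊆ (cyl σ)ᶜ} := by
    ext K
    simp [Set.not_nonempty_iff_eq_empty, ← Set.disjoint_iff_inter_eq_empty,
      Set.disjoint_compl_right_iff_subset, Set.subset_compl_iff_disjoint_right]
  rw [this]
  exact TopologicalSpace.isOpen_generateFrom_of_mem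
    (Or.inr ⟨(cyl σ)ᶜ, (isClosed_cyl σ).isOpen_compl, rfl⟩)

lemma measurable_hit (σ : List Bool) : MeasurableSet {K : CC | (K.1 ∩ cyl σ).Nonempty} :=
  measurableSet_of_isOpen (isOpen_hit σ)

lemma measurable_UA (n : ℕ) (A : Finset (List Bool)) : MeasurableSet (UA n A) := by
  have : UA n A = ⋂ σ : List Bool, {K : CC | σ.length ≤ n → (σ ∈ A ↔ (K.1 ∩ cyl σ).Nonempty)} := by
    ext K; simp [UA]
  rw [this]
  refine MeasurableSet.iInter fun σ => ?_
  by_cases hl : σ.length ≤ n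
  · by_cases hA : σ ∈ A
    · have : {K : CC | σ.length ≤ n → (σ ∈ A ↔ (K.1 ∩ cyl σ).Nonempty)}
          = {K : CC | (K.1 ∩ cyl σ).Nonempty} := by ext K; simp [hl, hA]
      rw [this]; exact measurable_hit σ
    · have : {K : CC | σ.length ≤ n → (σ ∈ A ↔ (K.1 ∩ cyl σ).Nonempty)}
          = {K : CC | ¬(K.1 ∩ cyl σ).Nonempty} := by ext K; simp [hl, hA]
      rw [this]; exact measurableSet_of_isOpen (isOpen_miss σ)
  · have : {K : CC | σ.length ≤ n → (σ ∈ A ↔ (K.1 ∩ cyl σ).Nonempty)} = univ := by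
      ext K; simp [hl]
    rw [this]; exact MeasurableSet.univ

-- ==== Part 3: finsets of strings and trees ====
def strsEq : ℕ → Finset (List Bool)
  | 0 => {[]}
  | n+1 => (strsEq n).image (List.cons false) ∪ (strsEq n).image (List.cons true)

lemma mem_strsEq {σ : List Bool} {n : ℕ} : σ ∈ strsEq n ↔ σ.length = n := by
  induction n generalizing σ with
  | zero => simp [strsEq, List.length_eq_zero_iff]
  | succ n ih =>
    cases σ with
    | nil => simp [strsEq]
    | cons b τ =>
      simp only [strsEq, Finset.mem_union, Finset.mem_image]
      constructor
      · rintro (⟨τ', hτ', h⟩ | ⟨τ', hτ', h⟩) <;>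
          (cases h; simp [ih.mp hτ'])
      · intro h
        have : τ.length = n := by simpa using h
        cases b
        · exact Or.inl ⟨τ, ih.mpr this, rfl⟩
        · exact Or.inr ⟨τ, ih.mpr this, rfl⟩

noncomputable def strsLe (n : ℕ) : Finset (List Bool) := (Finset.range (n+1)).biUnion strsEq

lemma mem_strsLe {σ : List Bool} {n : ℕ} : σ ∈ strsLe n ↔ σ.length ≤ n := by
  simp [strsLe, mem_strsEq, Nat.lt_succ_iff]

open Classical in
noncomputable def trees (n : ℕ) : Finset (Finset (List Bool)) :=
  ((strsLe n).powerset).filter (fun A => FinTree n A)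

lemma mem_trees {n : ℕ} {A : Finset (List Bool)} : A ∈ trees n ↔ FinTree n A := by
  simp only [trees, Finset.mem_filter, Finset.mem_powerset, and_iff_right_iff_imp]
  intro h σ hσ
  exact mem_strsLe.mpr (h.2.1 σ hσ)

open Classical in
noncomputable def treeOf (n : ℕ) (K : CC) : Finset (List Bool) :=
  (strsLe n).filter (fun σ => (K.1 ∩ cyl σ).Nonempty)

lemma mem_treeOf {n : ℕ} {K : CC} {σ : List Bool} :
    σ ∈ treeOf n K ↔ σ.length ≤ n ∧ (K.1 ∩ cyl σ).Nonempty := by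
  simp [treeOf, mem_strsLe]

-- x's first-n-bits string
def firstn (x : Cantor) (n : ℕ) : List Bool := List.ofFn (fun i : Fin n => x i)

lemma mem_cyl_firstn (x : Cantor) (n : ℕ) : x ∈ cyl (firstn x n) := by
  intro i
  rw [List.get_eq_getElem]
  simp [firstn]

lemma length_firstn (x : Cantor) (n : ℕ) : (firstn x n).length = n := by simp [firstn]

lemma finTree_treeOf (n : ℕ) (K : CC) : FinTree n (treeOf n K) := by
  refine ⟨⟨[], ?_⟩, ?_, ?_, ?_⟩
  · rw [mem_treeOf]
    refine ⟨by simp, ?_⟩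
    rw [cyl_nil]
    simpa using K.2.1
  · intro σ hσ; exact (mem_treeOf.mp hσ).1
  · intro σ τ hpre hτ
    rw [mem_treeOf] at hτ ⊢
    exact ⟨le_trans hpre.length_le hτ.1, hτ.2.mono (Set.inter_subset_inter_right _ (cyl_anti hpre))⟩
  · intro σ hσ hlt
    rw [mem_treeOf] at hσ
    obtain ⟨x, hxK, hxσ⟩ := hσ.2
    have hx : x ∈ cyl (σ ++ [x σ.length]) := by
      intro i
      rcases Nat.lt_or_ge i.1 σ.length with h | h
      · have := hxσ ⟨i.1, h⟩
        simp only [List.get_eq_getElem] at this ⊢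
        rw [List.getElem_append_left h]
        exact this
      · have hi : i.1 = σ.length := by
          have := i.2; simp at this; omega
        simp only [List.get_eq_getElem]
        rw [List.getElem_append_right (by omega)]
        simp [hi]
    have hmem : σ ++ [x σ.length] ∈ treeOf n K := by
      rw [mem_treeOf]
      exact ⟨by simpa using hlt, ⟨x, hxK, hx⟩⟩
    cases h : x σ.length
    · left; rwa [h] at hmem
    · right; rwa [h] at hmem

lemma mem_UA_iff {n : ℕ} {K : CC} {A : Finset (List Bool)} (hA : A ∈ trees n) :
    K ∈ UA n A ↔ A = treeOf n K := by
  constructor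
  · intro h
    apply Finset.ext
    intro σ
    rw [mem_treeOf]
    constructor
    · intro hσ
      have hl := (mem_trees.mp hA).2.1 σ hσ
      exact ⟨hl, (h σ hl).mp hσ⟩
    · rintro ⟨hl, hne⟩
      exact (h σ hl).mpr hne
  · rintro rfl
    intro σ hl
    rw [mem_treeOf]
    tauto

lemma self_mem_UA_treeOf (n : ℕ) (K : CC) : K ∈ UA n (treeOf n K) :=
  (mem_UA_iff (mem_trees.mpr (finTree_treeOf n K))).mpr rfl

-- ==== Part 4: measures of tree events ====

noncomputable def PP (b0 b1 : ℝ) (n : ℕ) (A : Finset (List Bool)) : ℝ :=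
  ∏ σ ∈ A.filter (fun σ => σ.length < n), asymWeight b0 b1 A σ

def MissE (S : Finset (List Bool)) : Set CC := {K | ∀ σ ∈ S, ¬(K.1 ∩ cyl σ).Nonempty}
def HitE (S : Finset (List Bool)) : Set CC := {K | ∃ σ ∈ S, (K.1 ∩ cyl σ).Nonempty}

lemma biUnion_UA_eq (n : ℕ) (p : Finset (List Bool) → Prop) [DecidablePred p] :
    ⋃ A ∈ (trees n).filter p, UA n A = {K : CC | p (treeOf n K)} := by
  ext K
  simp only [Set.mem_iUnion, Finset.mem_filter, Set.mem_setOf_eq]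
  constructor
  · rintro ⟨A, ⟨⟨hA, hp⟩, hK⟩⟩
    rwa [← (mem_UA_iff hA).mp hK]
  · intro h
    exact ⟨treeOf n K, ⟨⟨mem_trees.mpr (finTree_treeOf n K), h⟩, self_mem_UA_treeOf n K⟩⟩

lemma measure_tree_event {b0 b1 : ℝ} {μ : Measure CC} (hμ : IsBranching b0 b1 μ)
    (n : ℕ) (p : Finset (List Bool) → Prop) [DecidablePred p] :
    (μ {K : CC | p (treeOf n K)}).toReal = ∑ A ∈ (trees n).filter p, PP b0 b1 n A := by
  have hprob : IsProbabilityMeasure μ := hμ.1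
  rw [← biUnion_UA_eq n p]
  rw [measure_biUnion_finset ?_ (fun A _ => measurable_UA n A)]
  · rw [ENNReal.toReal_sum (fun A _ => measure_ne_top μ _)]
    refine Finset.sum_congr rfl fun A hA => ?_
    exact hμ.2 n A (mem_trees.mp (Finset.mem_filter.mp hA).1)
  · intro A hA B hB hne
    simp only [Finset.coe_filter, Set.mem_setOf_eq] at hA hB
    refine Set.disjoint_left.mpr fun K hKA hKB => hne ?_
    rw [(mem_UA_iff hA.1).mp hKA, (mem_UA_iff hB.1).mp hKB]

noncomputable def GG (b0 b1 : ℝ) (n : ℕ) (S : Finset (List Bool)) : ℝ :=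
  ∑ A ∈ (trees n).filter (fun A => ∀ σ ∈ S, σ ∉ A), PP b0 b1 n A

lemma missE_eq (n : ℕ) {S : Finset (List Bool)} (hS : ∀ σ ∈ S, σ.length ≤ n) :
    MissE S = {K : CC | ∀ σ ∈ S, σ ∉ treeOf n K} := by
  ext K
  simp only [MissE, Set.mem_setOf_eq]
  refine forall₂_congr fun σ hσ => ?_
  rw [mem_treeOf]
  simp [hS σ hσ]

lemma measure_missE {b0 b1 : ℝ} {μ : Measure CC} (hμ : IsBranching b0 b1 μ)
    (n : ℕ) {S : Finset (List Bool)} (hS : ∀ σ ∈ S, σ.length ≤ n) :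
    (μ (MissE S)).toReal = GG b0 b1 n S := by
  rw [missE_eq n hS]
  exact measure_tree_event hμ n (fun A => ∀ σ ∈ S, σ ∉ A)

lemma GG_empty {b0 b1 : ℝ} {μ : Measure CC} (hμ : IsBranching b0 b1 μ) (n : ℕ) :
    GG b0 b1 n (∅ : Finset (List Bool)) = 1 := by
  have := measure_missE hμ n (S := ∅) (by simp)
  have hm : MissE (∅ : Finset (List Bool)) = univ := by ext K; simp [MissE]
  rw [hm] at this
  have : (μ univ).toReal = GG b0 b1 n ∅ := this
  rw [← this]
  have hprob : IsProbabilityMeasure μ := hμ.1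
  simp

lemma isOpen_hitE (S : Finset (List Bool)) : IsOpen (HitE S) := by
  have : HitE S = ⋃ σ ∈ S, {K : CC | (K.1 ∩ cyl σ).Nonempty} := by
    ext K; simp [HitE]
  rw [this]
  exact isOpen_biUnion fun σ _ => isOpen_hit σ

lemma hitE_compl (S : Finset (List Bool)) : HitE S = (MissE S)ᶜ := by
  ext K; simp [HitE, MissE]

lemma measure_hitE {b0 b1 : ℝ} {μ : Measure CC} (hμ : IsBranching b0 b1 μ)
    (n : ℕ) {S : Finset (List Bool)} (hS : ∀ σ ∈ S, σ.length ≤ n) :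
    (μ (HitE S)).toReal = 1 - GG b0 b1 n S := by
  have hprob : IsProbabilityMeasure μ := hμ.1
  rw [hitE_compl]
  have hms : MeasurableSet (MissE S) := by
    rw [← compl_compl (MissE S), ← hitE_compl]
    exact (measurableSet_of_isOpen (isOpen_hitE S)).compl
  rw [measure_compl hms (measure_ne_top μ _)]
  rw [ENNReal.toReal_sub_of_le (measure_mono (Set.subset_univ _)) (measure_ne_top μ _)]
  rw [measure_missE hμ n hS]
  simp

-- ==== Part 5: tree surgery ====

def consT (i : Bool) (A : Finset (List Bool)) : Finset (List Bool) :=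
  insert [] (A.image (i :: ·))

def bothT (A0 A1 : Finset (List Bool)) : Finset (List Bool) :=
  insert [] (A0.image (false :: ·) ∪ A1.image (true :: ·))

def sub (i : Bool) (S : Finset (List Bool)) : Finset (List Bool) :=
  (S.filter (fun σ => σ.head? = some i)).image List.tail

lemma mem_sub {i : Bool} {S : Finset (List Bool)} {τ : List Bool} :
    τ ∈ sub i S ↔ i :: τ ∈ S := by
  simp only [sub, Finset.mem_image, Finset.mem_filter]
  constructor
  · rintro ⟨σ, ⟨hσ, hh⟩, rfl⟩
    cases σ with
    | nil => simp at hh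
    | cons b τ' => simp at hh; subst hh; exact hσ
  · intro h
    exact ⟨i :: τ, ⟨h, rfl⟩, rfl⟩

lemma mem_consT {i : Bool} {A : Finset (List Bool)} {σ : List Bool} :
    σ ∈ consT i A ↔ σ = [] ∨ ∃ τ ∈ A, σ = i :: τ := by
  simp only [consT, Finset.mem_insert, Finset.mem_image]
  constructor
  · rintro (h | ⟨τ, hτ, rfl⟩)
    · exact Or.inl h
    · exact Or.inr ⟨τ, hτ, rfl⟩
  · rintro (h | ⟨τ, hτ, rfl⟩)
    · exact Or.inl h
    · exact Or.inr ⟨τ, hτ, rfl⟩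

lemma mem_bothT {A0 A1 : Finset (List Bool)} {σ : List Bool} :
    σ ∈ bothT A0 A1 ↔ σ = [] ∨ (∃ τ ∈ A0, σ = false :: τ) ∨ (∃ τ ∈ A1, σ = true :: τ) := by
  simp only [bothT, Finset.mem_insert, Finset.mem_union, Finset.mem_image]
  constructor
  · rintro (h | (⟨τ, hτ, rfl⟩ | ⟨τ, hτ, rfl⟩))
    · exact Or.inl h
    · exact Or.inr (Or.inl ⟨τ, hτ, rfl⟩)
    · exact Or.inr (Or.inr ⟨τ, hτ, rfl⟩)
  · rintro (h | (⟨τ, hτ, rfl⟩ | ⟨τ, hτ, rfl⟩))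
    · exact Or.inl h
    · exact Or.inr (Or.inl ⟨τ, hτ, rfl⟩)
    · exact Or.inr (Or.inr ⟨τ, hτ, rfl⟩)

lemma nil_mem_tree {n : ℕ} {A : Finset (List Bool)} (h : FinTree n A) : [] ∈ A := by
  obtain ⟨σ, hσ⟩ := h.1
  exact h.2.2.1 [] σ (List.nil_prefix) hσ

lemma cons_mem_consT {i : Bool} {A : Finset (List Bool)} {j : Bool} {τ : List Bool} :
    j :: τ ∈ consT i A ↔ j = i ∧ τ ∈ A := by
  rw [mem_consT]
  constructor
  · rintro (h | ⟨τ', hτ', h⟩)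
    · simp at h
    · obtain ⟨rfl, rfl⟩ : j = i ∧ τ = τ' := by simpa using h
      exact ⟨rfl, hτ'⟩
  · rintro ⟨rfl, hτ⟩
    exact Or.inr ⟨τ, hτ, rfl⟩

lemma cons_mem_bothT {A0 A1 : Finset (List Bool)} {j : Bool} {τ : List Bool} :
    j :: τ ∈ bothT A0 A1 ↔ τ ∈ (if j then A1 else A0) := by
  rw [mem_bothT]
  cases j <;> simp

lemma finTree_consT {n : ℕ} {i : Bool} {A : Finset (List Bool)} (h : FinTree n A) :
    FinTree (n + 1) (consT i A) := by
  refine ⟨⟨[], by rw [mem_consT]; exact Or.inl rfl⟩, ?_, ?_, ?_⟩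
  · intro σ hσ
    rcases mem_consT.mp hσ with rfl | ⟨τ, hτ, rfl⟩
    · simp
    · simpa using Nat.succ_le_succ (h.2.1 τ hτ)
  · intro σ τ hpre hτ
    rcases mem_consT.mp hτ with rfl | ⟨τ', hτ', rfl⟩
    · rw [List.prefix_nil] at hpre; subst hpre; exact hτ
    · cases σ with
      | nil => exact mem_consT.mpr (Or.inl rfl)
      | cons j σ' =>
        rw [List.cons_prefix_cons] at hpre
        obtain ⟨rfl, hpre⟩ := hpre
        exact cons_mem_consT.mpr ⟨rfl, h.2.2.1 σ' τ' hpre hτ'⟩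
  · intro σ hσ hlt
    rcases mem_consT.mp hσ with rfl | ⟨τ, hτ, rfl⟩
    · have : ([] : List Bool) ++ [i] = [i] := rfl
      have hmem : [i] ∈ consT i A := cons_mem_consT.mpr ⟨rfl, nil_mem_tree h⟩
      cases i
      · exact Or.inl hmem
      · exact Or.inr hmem
    · have hlen : τ.length < n := by simpa using hlt
      rcases h.2.2.2 τ hτ hlen with hc | hc
      · exact Or.inl (by
          have : (i :: τ) ++ [false] = i :: (τ ++ [false]) := rfl
          rw [this]; exact cons_mem_consT.mpr ⟨rfl, hc⟩)
      · exact Or.inr (by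
          have : (i :: τ) ++ [true] = i :: (τ ++ [true]) := rfl
          rw [this]; exact cons_mem_consT.mpr ⟨rfl, hc⟩)

lemma finTree_bothT {n : ℕ} {A0 A1 : Finset (List Bool)} (h0 : FinTree n A0)
    (h1 : FinTree n A1) : FinTree (n + 1) (bothT A0 A1) := by
  refine ⟨⟨[], by rw [mem_bothT]; exact Or.inl rfl⟩, ?_, ?_, ?_⟩
  · intro σ hσ
    rcases mem_bothT.mp hσ with rfl | (⟨τ, hτ, rfl⟩ | ⟨τ, hτ, rfl⟩)
    · simp
    · simpa using Nat.succ_le_succ (h0.2.1 τ hτ)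
    · simpa using Nat.succ_le_succ (h1.2.1 τ hτ)
  · intro σ τ hpre hτ
    cases σ with
    | nil => exact mem_bothT.mpr (Or.inl rfl)
    | cons j σ' =>
      rcases mem_bothT.mp hτ with rfl | (⟨τ', hτ', rfl⟩ | ⟨τ', hτ', rfl⟩)
      · simp at hpre
      · rw [List.cons_prefix_cons] at hpre
        obtain ⟨rfl, hpre⟩ := hpre
        rw [cons_mem_bothT]
        simpa using h0.2.2.1 σ' τ' hpre hτ'
      · rw [List.cons_prefix_cons] at hpre
        obtain ⟨rfl, hpre⟩ := hpre
        rw [cons_mem_bothT]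
        simpa using h1.2.2.1 σ' τ' hpre hτ'
  · intro σ hσ hlt
    rcases mem_bothT.mp hσ with rfl | (⟨τ, hτ, rfl⟩ | ⟨τ, hτ, rfl⟩)
    · exact Or.inl (by
        show [false] ∈ _
        rw [cons_mem_bothT]; simpa using nil_mem_tree h0)
    · have hlen : τ.length < n := by simpa using hlt
      rcases h0.2.2.2 τ hτ hlen with hc | hc
      · exact Or.inl (by
          show (false :: (τ ++ [false])) ∈ _
          rw [cons_mem_bothT]; simpa using hc)
      · exact Or.inr (by
          show (false :: (τ ++ [true])) ∈ _
          rw [cons_mem_bothT]; simpa using hc)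
    · have hlen : τ.length < n := by simpa using hlt
      rcases h1.2.2.2 τ hτ hlen with hc | hc
      · exact Or.inl (by
          show (true :: (τ ++ [false])) ∈ _
          rw [cons_mem_bothT]; simpa using hc)
      · exact Or.inr (by
          show (true :: (τ ++ [true])) ∈ _
          rw [cons_mem_bothT]; simpa using hc)

lemma finTree_sub {n : ℕ} {A : Finset (List Bool)} {i : Bool} (h : FinTree (n + 1) A)
    (hi : [i] ∈ A) : FinTree n (sub i A) := by
  refine ⟨⟨[], mem_sub.mpr hi⟩, ?_, ?_, ?_⟩
  · intro τ hτ
    have := h.2.1 _ (mem_sub.mp hτ)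
    simpa using this
  · intro σ τ hpre hτ
    exact mem_sub.mpr (h.2.2.1 (i :: σ) (i :: τ) (by simpa [List.cons_prefix_cons] using hpre)
      (mem_sub.mp hτ))
  · intro τ hτ hlt
    have := h.2.2.2 (i :: τ) (mem_sub.mp hτ) (by simpa using Nat.succ_lt_succ hlt)
    rcases this with hc | hc
    · exact Or.inl (mem_sub.mpr hc)
    · exact Or.inr (mem_sub.mpr hc)

-- ==== Part 5b: classification of trees of height n+1 ====

lemma root_child {n : ℕ} {A : Finset (List Bool)} (h : FinTree (n + 1) A) :
    [false] ∈ A ∨ [true] ∈ A := by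
  simpa using h.2.2.2 [] (nil_mem_tree h) (Nat.succ_pos n)

lemma tree_eq_consT {n : ℕ} {A : Finset (List Bool)} (h : FinTree (n + 1) A) {i : Bool}
    (hni : [!i] ∉ A) : A = consT i (sub i A) := by
  ext σ
  rw [mem_consT]
  constructor
  · intro hσ
    cases σ with
    | nil => exact Or.inl rfl
    | cons j τ =>
      have hj : j = i := by
        by_contra hne
        have : j = !i := by cases i <;> cases j <;> simp_all
        subst this
        exact hni (h.2.2.1 [!i] ((!i) :: τ) (⟨τ, rfl⟩ : [!i] <+: (!i) :: τ) hσ)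
      subst hj
      exact Or.inr ⟨τ, mem_sub.mpr hσ, rfl⟩
  · rintro (rfl | ⟨τ, hτ, rfl⟩)
    · exact nil_mem_tree h
    · exact mem_sub.mp hτ

lemma tree_eq_bothT {n : ℕ} {A : Finset (List Bool)} (h : FinTree (n + 1) A) :
    A = bothT (sub false A) (sub true A) := by
  ext σ
  rw [mem_bothT]
  constructor
  · intro hσ
    cases σ with
    | nil => exact Or.inl rfl
    | cons j τ =>
      cases j
      · exact Or.inr (Or.inl ⟨τ, mem_sub.mpr hσ, rfl⟩)
      · exact Or.inr (Or.inr ⟨τ, mem_sub.mpr hσ, rfl⟩)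
  · rintro (rfl | (⟨τ, hτ, rfl⟩ | ⟨τ, hτ, rfl⟩))
    · exact nil_mem_tree h
    · exact mem_sub.mp hτ
    · exact mem_sub.mp hτ

lemma trees_succ (n : ℕ) :
    trees (n + 1) =
      (((trees n).image (consT false)) ∪ ((trees n).image (consT true))) ∪
        (((trees n) ×ˢ (trees n)).image (fun p => bothT p.1 p.2)) := by
  ext A
  simp only [Finset.mem_union, Finset.mem_image, Finset.mem_product, mem_trees, Prod.exists]
  constructor
  · intro h
    by_cases ht : [true] ∈ A
    · by_cases hf : [false] ∈ A
      · refine Or.inr ⟨sub false A, sub true A, ⟨finTree_sub h hf, finTree_sub h ht⟩, ?_⟩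
        exact (tree_eq_bothT h).symm
      · refine Or.inl (Or.inr ⟨sub true A, finTree_sub h ht, ?_⟩)
        have : [!true] ∉ A := by simpa using hf
        exact (tree_eq_consT h this).symm
    · have hf : [false] ∈ A := (root_child h).resolve_right ht
      refine Or.inl (Or.inl ⟨sub false A, finTree_sub h hf, ?_⟩)
      have : [!false] ∉ A := by simpa using ht
      exact (tree_eq_consT h this).symm
  · rintro ((⟨A0, h0, rfl⟩ | ⟨A1, h1, rfl⟩) | ⟨A0, A1, ⟨h0, h1⟩, rfl⟩)
    · exact finTree_consT h0
    · exact finTree_consT h1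
    · exact finTree_bothT h0 h1

lemma true_notMem_consT_false {A : Finset (List Bool)} : [true] ∉ consT false A := by
  rw [mem_consT]; rintro (h | ⟨τ, hτ, h⟩) <;> simp_all

lemma false_notMem_consT_true {A : Finset (List Bool)} : [false] ∉ consT true A := by
  rw [mem_consT]; rintro (h | ⟨τ, hτ, h⟩) <;> simp_all

lemma consT_injOn (i : Bool) : Set.InjOn (consT i) ↑(trees n) := by
  intro A hA B hB hEq
  ext τ
  have := Finset.ext_iff.mp hEq (i :: τ)
  rw [cons_mem_consT, cons_mem_consT] at this
  simpa using this

lemma bothT_injOn : Set.InjOn (fun p : Finset (List Bool) × Finset (List Bool) => bothT p.1 p.2)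
    ↑((trees n) ×ˢ (trees n)) := by
  rintro ⟨A0, A1⟩ _ ⟨B0, B1⟩ _ hEq
  simp only at hEq
  have h0 : A0 = B0 := by
    ext τ
    have := Finset.ext_iff.mp hEq (false :: τ)
    rwa [cons_mem_bothT, cons_mem_bothT] at this
  have h1 : A1 = B1 := by
    ext τ
    have := Finset.ext_iff.mp hEq (true :: τ)
    rwa [cons_mem_bothT, cons_mem_bothT] at this
  simp [h0, h1]

-- ==== Part 5c: products ====

lemma asymWeight_congr {b0 b1 : ℝ} {A B : Finset (List Bool)} {σ τ : List Bool}
    (h0 : σ ++ [false] ∈ A ↔ τ ++ [false] ∈ B) (h1 : σ ++ [true] ∈ A ↔ τ ++ [true] ∈ B) :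
    asymWeight b0 b1 A σ = asymWeight b0 b1 B τ := by
  unfold asymWeight
  simp only [h0, h1]

lemma asymWeight_consT_cons {b0 b1 : ℝ} {i : Bool} {A : Finset (List Bool)} {τ : List Bool} :
    asymWeight b0 b1 (consT i A) (i :: τ) = asymWeight b0 b1 A τ := by
  refine asymWeight_congr ?_ ?_ <;>
  · show (i :: (τ ++ _)) ∈ _ ↔ _
    rw [cons_mem_consT]
    simp

lemma asymWeight_bothT_cons {b0 b1 : ℝ} {i : Bool} {A0 A1 : Finset (List Bool)} {τ : List Bool} :
    asymWeight b0 b1 (bothT A0 A1) (i :: τ) = asymWeight b0 b1 (if i then A1 else A0) τ := by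
  refine asymWeight_congr ?_ ?_ <;>
  · show (i :: (τ ++ _)) ∈ _ ↔ _
    rw [cons_mem_bothT]

lemma asymWeight_consT_nil {b0 b1 : ℝ} {i : Bool} {A : Finset (List Bool)} (hA : [] ∈ A) :
    asymWeight b0 b1 (consT i A) [] = if i then b1 else b0 := by
  have hf : ([] : List Bool) ++ [false] ∈ consT i A ↔ (false = i) := by
    show ((false :: []) ∈ _) ↔ _
    rw [cons_mem_consT]
    simp [hA]
  have ht : ([] : List Bool) ++ [true] ∈ consT i A ↔ (true = i) := by
    show ((true :: []) ∈ _) ↔ _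
    rw [cons_mem_consT]
    simp [hA]
  unfold asymWeight
  cases i
  · simp only [hf, ht]; simp
  · simp only [hf, ht]; simp

lemma asymWeight_bothT_nil {b0 b1 : ℝ} {A0 A1 : Finset (List Bool)} (h0 : [] ∈ A0)
    (h1 : [] ∈ A1) : asymWeight b0 b1 (bothT A0 A1) [] = 1 - b0 - b1 := by
  have hf : ([] : List Bool) ++ [false] ∈ bothT A0 A1 := by
    show ((false :: []) ∈ _); rw [cons_mem_bothT]; simpa
  have ht : ([] : List Bool) ++ [true] ∈ bothT A0 A1 := by
    show ((true :: []) ∈ _); rw [cons_mem_bothT]; simpa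
  unfold asymWeight
  rw [if_pos ⟨hf, ht⟩]

lemma filter_consT {n : ℕ} {i : Bool} {A : Finset (List Bool)} :
    (consT i A).filter (fun σ => σ.length < n + 1) =
      insert [] ((A.filter (fun σ => σ.length < n)).image (i :: ·)) := by
  ext σ
  simp only [Finset.mem_filter, Finset.mem_insert, Finset.mem_image]
  cases σ with
  | nil => simp [mem_consT]
  | cons j τ =>
    rw [cons_mem_consT]
    constructor
    · rintro ⟨⟨rfl, hτ⟩, hl⟩
      exact Or.inr ⟨τ, ⟨hτ, by simpa using hl⟩, rfl⟩
    · rintro (h | ⟨τ', ⟨hm, hl⟩, h⟩)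
      · simp at h
      · obtain ⟨rfl, rfl⟩ : i = j ∧ τ' = τ := by simpa using h
        exact ⟨⟨rfl, hm⟩, by simpa using hl⟩

lemma filter_bothT {n : ℕ} {A0 A1 : Finset (List Bool)} :
    (bothT A0 A1).filter (fun σ => σ.length < n + 1) =
      insert [] (((A0.filter (fun σ => σ.length < n)).image (false :: ·)) ∪
        ((A1.filter (fun σ => σ.length < n)).image (true :: ·))) := by
  ext σ
  simp only [Finset.mem_filter, Finset.mem_insert, Finset.mem_union, Finset.mem_image]
  cases σ with
  | nil => simp [mem_bothT]
  | cons j τ =>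
    rw [cons_mem_bothT]
    constructor
    · rintro ⟨hm, hl⟩
      cases j
      · simp only [if_neg Bool.false_ne_true] at hm
        exact Or.inr (Or.inl ⟨τ, ⟨hm, by simpa using hl⟩, rfl⟩)
      · simp only [if_pos rfl] at hm
        exact Or.inr (Or.inr ⟨τ, ⟨hm, by simpa using hl⟩, rfl⟩)
    · rintro (h | (⟨τ', ⟨hm, hl⟩, h⟩ | ⟨τ', ⟨hm, hl⟩, h⟩))
      · simp at h
      · obtain ⟨rfl, rfl⟩ : j = false ∧ τ' = τ := by simpa [eq_comm] using h
        exact ⟨by simpa using hm, by simpa using hl⟩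
      · obtain ⟨rfl, rfl⟩ : j = true ∧ τ' = τ := by simpa [eq_comm] using h
        exact ⟨by simpa using hm, by simpa using hl⟩

lemma nil_notMem_image_cons {i : Bool} {t : Finset (List Bool)} :
    ([] : List Bool) ∉ t.image (i :: ·) := by simp

lemma PP_consT {b0 b1 : ℝ} {n : ℕ} {i : Bool} {A : Finset (List Bool)} (hA : FinTree n A) :
    PP b0 b1 (n + 1) (consT i A) = (if i then b1 else b0) * PP b0 b1 n A := by
  unfold PP
  rw [filter_consT, Finset.prod_insert nil_notMem_image_cons,
    Finset.prod_image (fun x _ y _ h => by simpa using h),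
    asymWeight_consT_nil (nil_mem_tree hA)]
  congr 1
  exact Finset.prod_congr rfl fun τ _ => asymWeight_consT_cons

lemma PP_bothT {b0 b1 : ℝ} {n : ℕ} {A0 A1 : Finset (List Bool)} (h0 : FinTree n A0)
    (h1 : FinTree n A1) :
    PP b0 b1 (n + 1) (bothT A0 A1) = (1 - b0 - b1) * (PP b0 b1 n A0 * PP b0 b1 n A1) := by
  unfold PP
  have hdisj : Disjoint ((A0.filter (fun σ => σ.length < n)).image (false :: ·))
      ((A1.filter (fun σ => σ.length < n)).image (true :: ·)) := by
    rw [Finset.disjoint_left]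
    rintro σ h0' h1'
    obtain ⟨τ, _, rfl⟩ := Finset.mem_image.mp h0'
    obtain ⟨τ', _, h⟩ := Finset.mem_image.mp h1'
    simp at h
  rw [filter_bothT, Finset.prod_insert (by simp), Finset.prod_union hdisj,
    Finset.prod_image (fun x _ y _ h => by simpa using h),
    Finset.prod_image (fun x _ y _ h => by simpa using h),
    asymWeight_bothT_nil (nil_mem_tree h0) (nil_mem_tree h1)]
  congr 1
  congr 1
  · exact Finset.prod_congr rfl fun τ _ => by
      simpa using (asymWeight_bothT_cons (i := false))
  · exact Finset.prod_congr rfl fun τ _ => by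
      simpa using (asymWeight_bothT_cons (i := true))

-- ==== Part 5d: the recursion ====

lemma miss_consT {i : Bool} {S A : Finset (List Bool)} (hS : ([] : List Bool) ∉ S) :
    (∀ σ ∈ S, σ ∉ consT i A) ↔ ∀ τ ∈ sub i S, τ ∉ A := by
  constructor
  · intro h τ hτ hA
    exact h (i :: τ) (mem_sub.mp hτ) (cons_mem_consT.mpr ⟨rfl, hA⟩)
  · intro h σ hσ hm
    cases σ with
    | nil => exact hS hσ
    | cons j τ =>
      obtain ⟨rfl, hA⟩ := cons_mem_consT.mp hm
      exact h τ (mem_sub.mpr hσ) hA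

lemma miss_bothT {S A0 A1 : Finset (List Bool)} (hS : ([] : List Bool) ∉ S) :
    (∀ σ ∈ S, σ ∉ bothT A0 A1) ↔
      ((∀ τ ∈ sub false S, τ ∉ A0) ∧ (∀ τ ∈ sub true S, τ ∉ A1)) := by
  constructor
  · intro h
    exact ⟨fun τ hτ hA => h _ (mem_sub.mp hτ) (by rw [cons_mem_bothT]; simpa),
           fun τ hτ hA => h _ (mem_sub.mp hτ) (by rw [cons_mem_bothT]; simpa)⟩
  · rintro ⟨h0, h1⟩ σ hσ hm
    cases σ with
    | nil => exact hS hσ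
    | cons j τ =>
      rw [cons_mem_bothT] at hm
      cases j
      · exact h0 τ (mem_sub.mpr hσ) (by simpa using hm)
      · exact h1 τ (mem_sub.mpr hσ) (by simpa using hm)

lemma disj12 {n : ℕ} :
    Disjoint ((trees n).image (consT false)) ((trees n).image (consT true)) := by
  rw [Finset.disjoint_left]
  rintro A hA hB
  obtain ⟨A0, h0, rfl⟩ := Finset.mem_image.mp hA
  obtain ⟨A1, h1, heq⟩ := Finset.mem_image.mp hB
  have hf : [false] ∈ consT false A0 :=
    cons_mem_consT.mpr ⟨rfl, nil_mem_tree (mem_trees.mp h0)⟩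
  rw [← heq] at hf
  exact false_notMem_consT_true hf

lemma disj3 {n : ℕ} :
    Disjoint (((trees n).image (consT false)) ∪ ((trees n).image (consT true)))
      (((trees n) ×ˢ (trees n)).image (fun p => bothT p.1 p.2)) := by
  rw [Finset.disjoint_left]
  rintro A hA hB
  obtain ⟨⟨B0, B1⟩, hp, heq⟩ := Finset.mem_image.mp hB
  obtain ⟨hB0, hB1⟩ := Finset.mem_product.mp hp
  simp only at heq
  have hf : [false] ∈ A := by
    rw [← heq, cons_mem_bothT]; simpa using nil_mem_tree (mem_trees.mp hB0)
  have ht : [true] ∈ A := by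
    rw [← heq, cons_mem_bothT]; simpa using nil_mem_tree (mem_trees.mp hB1)
  rcases Finset.mem_union.mp hA with h | h
  · obtain ⟨A0, _, rfl⟩ := Finset.mem_image.mp h
    exact true_notMem_consT_false ht
  · obtain ⟨A1, _, rfl⟩ := Finset.mem_image.mp h
    exact false_notMem_consT_true hf

lemma GG_rec (b0 b1 : ℝ) (n : ℕ) {S : Finset (List Bool)} (hS : ([] : List Bool) ∉ S) :
    GG b0 b1 (n + 1) S =
      b0 * GG b0 b1 n (sub false S) + b1 * GG b0 b1 n (sub true S) +
        (1 - b0 - b1) * (GG b0 b1 n (sub false S) * GG b0 b1 n (sub true S)) := by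
  have e1 : ∀ i : Bool,
      (∑ A ∈ (((trees n).image (consT i)).filter (fun A => ∀ σ ∈ S, σ ∉ A)),
        PP b0 b1 (n + 1) A) = (if i then b1 else b0) * GG b0 b1 n (sub i S) := by
    intro i
    rw [Finset.filter_image,
      Finset.sum_image (fun x hx y hy h =>
        consT_injOn i (Finset.mem_coe.mpr (Finset.filter_subset _ _ hx))
          (Finset.mem_coe.mpr (Finset.filter_subset _ _ hy)) h),
      Finset.filter_congr (fun A _ => miss_consT hS)]
    unfold GG
    rw [Finset.mul_sum]
    refine Finset.sum_congr rfl fun A hA => ?_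
    exact PP_consT (mem_trees.mp (Finset.mem_filter.mp hA).1)
  have e3 :
      (∑ A ∈ ((((trees n) ×ˢ (trees n)).image (fun p => bothT p.1 p.2)).filter
          (fun A => ∀ σ ∈ S, σ ∉ A)), PP b0 b1 (n + 1) A) =
        (1 - b0 - b1) * (GG b0 b1 n (sub false S) * GG b0 b1 n (sub true S)) := by
    rw [Finset.filter_image,
      Finset.sum_image (fun x hx y hy h =>
        bothT_injOn (Finset.mem_coe.mpr (Finset.filter_subset _ _ hx))
          (Finset.mem_coe.mpr (Finset.filter_subset _ _ hy)) h),
      Finset.filter_congr (fun p _ => miss_bothT hS),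
      Finset.filter_product (fun A0 => ∀ τ ∈ sub false S, τ ∉ A0)
        (fun A1 => ∀ τ ∈ sub true S, τ ∉ A1), Finset.sum_product]
    unfold GG
    rw [Finset.sum_mul_sum, Finset.mul_sum]
    refine Finset.sum_congr rfl fun A0 hA0 => ?_
    rw [Finset.mul_sum]
    refine Finset.sum_congr rfl fun A1 hA1 => ?_
    exact PP_bothT (mem_trees.mp (Finset.mem_filter.mp hA0).1)
      (mem_trees.mp (Finset.mem_filter.mp hA1).1)
  have lhs_eq : GG b0 b1 (n + 1) S =
      (∑ A ∈ (((trees n).image (consT false)).filter (fun A => ∀ σ ∈ S, σ ∉ A)),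
        PP b0 b1 (n + 1) A) +
      (∑ A ∈ (((trees n).image (consT true)).filter (fun A => ∀ σ ∈ S, σ ∉ A)),
        PP b0 b1 (n + 1) A) +
      (∑ A ∈ ((((trees n) ×ˢ (trees n)).image (fun p => bothT p.1 p.2)).filter
          (fun A => ∀ σ ∈ S, σ ∉ A)), PP b0 b1 (n + 1) A) := by
    unfold GG
    rw [trees_succ n, Finset.filter_union,
      Finset.sum_union (Finset.disjoint_filter_filter disj3), Finset.filter_union,
      Finset.sum_union (Finset.disjoint_filter_filter disj12)]
  rw [lhs_eq, e1 false, e1 true, e3]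
  simp

-- ==== Part 6: limits and the main theorem ====

open Classical in
noncomputable def SQ (Q : Set Cantor) (n : ℕ) : Finset (List Bool) :=
  (strsEq n).filter (fun σ => (Q ∩ cyl σ).Nonempty)

lemma mem_SQ {Q : Set Cantor} {n : ℕ} {σ : List Bool} :
    σ ∈ SQ Q n ↔ σ.length = n ∧ (Q ∩ cyl σ).Nonempty := by
  simp [SQ, mem_strsEq]

lemma take_mem_SQ {Q : Set Cantor} {m n : ℕ} (h : m ≤ n) {σ : List Bool} (hσ : σ ∈ SQ Q n) :
    σ.take m ∈ SQ Q m := by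
  obtain ⟨hlen, hne⟩ := mem_SQ.mp hσ
  refine mem_SQ.mpr ⟨by simp [hlen, h], ?_⟩
  exact hne.mono (Set.inter_subset_inter_right _ (cyl_anti (List.take_prefix m σ)))

lemma hitSQ_antitone (Q : Set Cantor) : Antitone (fun n => HitE (SQ Q n)) := by
  intro m n h K hK
  obtain ⟨σ, hσ, hKσ⟩ := hK
  exact ⟨σ.take m, take_mem_SQ h hσ, hKσ.mono
    (Set.inter_subset_inter_right _ (cyl_anti (List.take_prefix m σ)))⟩

lemma iInter_hitSQ {Q : Set Cantor} (hQ : IsClosed Q) :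
    (⋂ n, HitE (SQ Q n)) = {K : CC | (K.1 ∩ Q).Nonempty} := by
  ext K
  simp only [Set.mem_iInter, Set.mem_setOf_eq]
  constructor
  · intro h
    -- compactness argument
    set C : ℕ → Set Cantor := fun n => K.1 ∩ ⋃ σ ∈ SQ Q n, cyl σ with hC
    have hCcl : ∀ n, IsClosed (C n) :=
      fun n => K.2.2.inter (isClosed_biUnion_finset fun σ _ => isClosed_cyl σ)
    have hCne : ∀ n, (C n).Nonempty := by
      intro n
      obtain ⟨σ, hσ, x, hxK, hxσ⟩ := h n
      exact ⟨x, hxK, Set.mem_biUnion hσ hxσ⟩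
    have hCsub : ∀ n, C (n + 1) ⊆ C n := by
      intro n x hx
      obtain ⟨hxK, hxcyl⟩ := hx
      obtain ⟨σ, hσ, hxσ⟩ := Set.mem_iUnion₂.mp hxcyl
      refine ⟨hxK, Set.mem_biUnion (take_mem_SQ (Nat.le_succ n) hσ)
        (cyl_anti (List.take_prefix n σ) hxσ)⟩
    obtain ⟨x, hx⟩ := IsCompact.nonempty_iInter_of_sequence_nonempty_isCompact_isClosed
      C hCsub hCne ((hCcl 0).isCompact) hCcl
    have hxC : ∀ n, x ∈ C n := Set.mem_iInter.mp hx
    have hxK : x ∈ K.1 := (hxC 0).1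
    have hy : ∀ n, ∃ y ∈ Q, ∀ i < n, y i = x i := by
      intro n
      obtain ⟨-, hxcyl⟩ := hxC n
      obtain ⟨σ, hσ, hxσ⟩ := Set.mem_iUnion₂.mp hxcyl
      obtain ⟨hlen, y, hyQ, hyσ⟩ := mem_SQ.mp hσ
      refine ⟨y, hyQ, fun i hi => ?_⟩
      have h1 := hyσ ⟨i, by rw [hlen]; exact hi⟩
      have h2 := hxσ ⟨i, by rw [hlen]; exact hi⟩
      exact h1.trans h2.symm
    choose y hyQ hyx using hy
    have hty : Tendsto y atTop (𝓝 x) := by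
      rw [tendsto_pi_nhds]
      intro i
      refine tendsto_const_nhds.congr' ?_
      filter_upwards [eventually_ge_atTop (i + 1)] with n hn
      exact (hyx n i (by omega)).symm
    exact ⟨x, hxK, hQ.mem_of_tendsto hty (Filter.Eventually.of_forall hyQ)⟩
  · rintro ⟨x, hxK, hxQ⟩ n
    exact ⟨firstn x n, mem_SQ.mpr ⟨length_firstn x n, ⟨x, hxQ, mem_cyl_firstn x n⟩⟩,
      ⟨x, hxK, mem_cyl_firstn x n⟩⟩

-- ==== Part 7: final assembly ====

lemma cap_tendsto {b0 b1 : ℝ} {μ : Measure CC} (hμ : IsBranching b0 b1 μ) {Q : Set Cantor}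
    (hQ : IsClosed Q) :
    Tendsto (fun n => (μ (HitE (SQ Q n))).toReal) atTop (𝓝 (cap μ Q)) := by
  have hprob : IsProbabilityMeasure μ := hμ.1
  have hmeas : ∀ n : ℕ, NullMeasurableSet (HitE (SQ Q n)) μ :=
    fun n => (measurableSet_of_isOpen (isOpen_hitE _)).nullMeasurableSet
  have h := tendsto_measure_iInter_atTop hmeas (hitSQ_antitone Q) ⟨0, measure_ne_top μ _⟩
  rw [iInter_hitSQ hQ] at h
  exact (ENNReal.tendsto_toReal (measure_ne_top μ _)).comp h

lemma consSeq_mem_cyl {i j : Bool} {x : Cantor} {τ : List Bool} :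
    consSeq i x ∈ cyl (j :: τ) ↔ i = j ∧ x ∈ cyl τ :=
  consSeq_mem_cyl_cons consSeq (fun _ _ => rfl) (fun _ _ _ => rfl)

lemma consSet_inter_cyl {j i : Bool} {Qj : Set Cantor} {τ : List Bool} :
    (consSet j Qj ∩ cyl (i :: τ)).Nonempty ↔ j = i ∧ (Qj ∩ cyl τ).Nonempty := by
  constructor
  · rintro ⟨z, ⟨x, hx, rfl⟩, hz⟩
    obtain ⟨rfl, hcyl⟩ := consSeq_mem_cyl.mp hz
    exact ⟨rfl, x, hx, hcyl⟩
  · rintro ⟨rfl, x, hx, hcyl⟩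
    exact ⟨consSeq j x, ⟨x, hx, rfl⟩, consSeq_mem_cyl.mpr ⟨rfl, hcyl⟩⟩

lemma sub_SQ {Q0 Q1 : Set Cantor} (i : Bool) (n : ℕ) :
    sub i (SQ (consSet false Q0 ∪ consSet true Q1) (n + 1)) = SQ (if i then Q1 else Q0) n := by
  ext τ
  rw [mem_sub, mem_SQ, mem_SQ]
  have hlen : (i :: τ).length = n + 1 ↔ τ.length = n := by simp
  rw [hlen]
  refine and_congr_right fun _ => ?_
  rw [Set.union_inter_distrib_right, Set.union_nonempty, consSet_inter_cyl, consSet_inter_cyl]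
  cases i <;> simp

lemma nil_notMem_SQ {Q : Set Cantor} {n : ℕ} : ([] : List Bool) ∉ SQ Q (n + 1) := by
  intro h
  simpa using (mem_SQ.mp h).1

lemma continuous_consSeq (i : Bool) : Continuous (consSeq i) := by
  apply continuous_pi
  intro k
  cases k with
  | zero => exact continuous_const
  | succ m => exact continuous_apply m

lemma isClosed_consSet {i : Bool} {Q : Set Cantor} (hQ : IsClosed Q) :
    IsClosed (consSet i Q) :=
  (hQ.isCompact.image (continuous_consSeq i)).isClosed

theorem stmt_13_aux (b0 b1 : ℝ) (hb1 : 0 < b1) (hb01 : b1 ≤ b0) (hsum : b0 + b1 < 1)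
    (μ : Measure CC) (hμ : IsBranching b0 b1 μ)
    (Q0 Q1 : Set Cantor) (h0 : IsClosed Q0) (h1 : IsClosed Q1) :
    cap μ (consSet false Q0 ∪ consSet true Q1) =
      (1 - b1) * cap μ Q0 + (1 - b0) * cap μ Q1 -
        (1 - (b0 + b1)) * (cap μ Q0 * cap μ Q1) := by
  set Q : Set Cantor := consSet false Q0 ∪ consSet true Q1 with hQdef
  have hQc : IsClosed Q := (isClosed_consSet h0).union (isClosed_consSet h1)
  set a : ℕ → ℝ := fun n => (μ (HitE (SQ Q n))).toReal with ha_def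
  set c0 : ℕ → ℝ := fun n => (μ (HitE (SQ Q0 n))).toReal with hc0_def
  set c1 : ℕ → ℝ := fun n => (μ (HitE (SQ Q1 n))).toReal with hc1_def
  have ha : Tendsto a atTop (𝓝 (cap μ Q)) := cap_tendsto hμ hQc
  have hc0 : Tendsto c0 atTop (𝓝 (cap μ Q0)) := cap_tendsto hμ h0
  have hc1 : Tendsto c1 atTop (𝓝 (cap μ Q1)) := cap_tendsto hμ h1
  have hGGa : ∀ n, GG b0 b1 n (SQ Q n) = 1 - a n := by
    intro n
    have := measure_hitE hμ n (S := SQ Q n) (fun σ hσ => le_of_eq (mem_SQ.mp hσ).1)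
    rw [ha_def]
    simp only
    rw [this]
    ring
  have hGG0 : ∀ n, GG b0 b1 n (SQ Q0 n) = 1 - c0 n := by
    intro n
    have := measure_hitE hμ n (S := SQ Q0 n) (fun σ hσ => le_of_eq (mem_SQ.mp hσ).1)
    rw [hc0_def]; simp only; rw [this]; ring
  have hGG1 : ∀ n, GG b0 b1 n (SQ Q1 n) = 1 - c1 n := by
    intro n
    have := measure_hitE hμ n (S := SQ Q1 n) (fun σ hσ => le_of_eq (mem_SQ.mp hσ).1)
    rw [hc1_def]; simp only; rw [this]; ring
  have key : ∀ n, a (n + 1) =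
      1 - (b0 * (1 - c0 n) + b1 * (1 - c1 n) + (1 - b0 - b1) * ((1 - c0 n) * (1 - c1 n))) := by
    intro n
    have hrec := GG_rec b0 b1 n (S := SQ Q (n + 1)) nil_notMem_SQ
    have hs0 : sub false (SQ Q (n + 1)) = SQ Q0 n := by
      rw [hQdef]; simpa using sub_SQ (Q0 := Q0) (Q1 := Q1) false n
    have hs1 : sub true (SQ Q (n + 1)) = SQ Q1 n := by
      rw [hQdef]; simpa using sub_SQ (Q0 := Q0) (Q1 := Q1) true n
    rw [hs0, hs1, hGGa (n + 1), hGG0 n, hGG1 n] at hrec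
    linarith
  have hlim2 : Tendsto (fun n => a (n + 1)) atTop (𝓝 (cap μ Q)) :=
    ha.comp (tendsto_add_atTop_nat 1)
  have hlim3 : Tendsto (fun n =>
      1 - (b0 * (1 - c0 n) + b1 * (1 - c1 n) + (1 - b0 - b1) * ((1 - c0 n) * (1 - c1 n))))
      atTop (𝓝 (1 - (b0 * (1 - cap μ Q0) + b1 * (1 - cap μ Q1) +
        (1 - b0 - b1) * ((1 - cap μ Q0) * (1 - cap μ Q1))))) := by
    have h10 : Tendsto (fun n => 1 - c0 n) atTop (𝓝 (1 - cap μ Q0)) :=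
      tendsto_const_nhds.sub hc0
    have h11 : Tendsto (fun n => 1 - c1 n) atTop (𝓝 (1 - cap μ Q1)) :=
      tendsto_const_nhds.sub hc1
    exact tendsto_const_nhds.sub (((h10.const_mul b0).add (h11.const_mul b1)).add
      ((h10.mul h11).const_mul (1 - b0 - b1)))
  have hfinal : cap μ Q = 1 - (b0 * (1 - cap μ Q0) + b1 * (1 - cap μ Q1) +
      (1 - b0 - b1) * ((1 - cap μ Q0) * (1 - cap μ Q1))) := by
    refine tendsto_nhds_unique hlim2 ?_
    exact hlim3.congr (fun n => (key n).symm)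
  rw [← hQdef] at *
  rw [hfinal]
  ring

/-- the capacity of `Q = 0⌢Q₀ ∪ 1⌢Q₁` satisfies
`T(Q) = (1 − b₁)q₀ + (1 − b₀)q₁ − (1 − (b₀ + b₁))·q₀·q₁`. -/
theorem stmt_13 (b0 b1 : ℝ) (hb1 : 0 < b1) (hb01 : b1 ≤ b0) (hsum : b0 + b1 < 1)
    (μ : Measure CC) (hμ : IsBranching b0 b1 μ)
    (Q0 Q1 : Set Cantor) (h0 : IsClosed Q0) (h1 : IsClosed Q1) :
    cap μ (consSet false Q0 ∪ consSet true Q1) =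
      (1 - b1) * cap μ Q0 + (1 - b0) * cap μ Q1 -
        (1 - (b0 + b1)) * (cap μ Q0 * cap μ Q1) := by
  exact stmt_13_aux b0 b1 hb1 hb01 hsum μ hμ Q0 Q1 h0 h1
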